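/- Let (K,{Fᵢ}₁ᴺ) be a self-similar set satisfying the weak overlapping condition (WOC_ρ) with bound L₁, and let the probability weights p satisfy the average condition (AV_ρ) with comparability constant C₊ on intersecting cells of equal partition level. Then there exists C_μ > 0 such that the self-similar measure μ satisfies μ(K_τ) ≤ C_μ · p_τ for every finite word τ. One may take C_μ = C₊·L₁. -/

import Mathlib

open MeasureTheory

namespace SSS

/-- The weight of a finite word: the product of the tuple entries along the word. -/
def wt {N : ℕ} (θ : Fin N → ℝ) (w : List (Fin N)) : ℝ := (w.map θ).prod

/-- The partition `Λ_θ(r)`: non-empty words `w` with `θ_w ≤ r < θ_w / θ_{w_last}`. -/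
def partition {N : ℕ} (θ : Fin N → ℝ) (r : ℝ) : Set (List (Fin N)) :=
  {w | ∃ h : w ≠ [], wt θ w ≤ r ∧ r < wt θ w / θ (w.getLast h)}

/-- The iterated map `F_w = F_{w₁} ∘ ⋯ ∘ F_{wₙ}`. -/
def Fword {M : Type*} {N : ℕ} (F : Fin N → M → M) : List (Fin N) → M → M
  | [] => id
  | i :: w => F i ∘ Fword F w

/-- The cell `K_w = F_w(K)`. -/
def cell {M : Type*} {N : ℕ} (F : Fin N → M → M) (K : Set M)
    (w : List (Fin N)) : Set M := Fword F w '' K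

variable {N : ℕ} {θ ρ p : Fin N → ℝ}

lemma wt_nil : wt θ [] = 1 := rfl

lemma wt_cons (i : Fin N) (w : List (Fin N)) : wt θ (i :: w) = θ i * wt θ w := by
  simp [wt]

lemma wt_append (w v : List (Fin N)) : wt θ (w ++ v) = wt θ w * wt θ v := by
  simp [wt]

lemma wt_pos (h : ∀ i, 0 < θ i) (w : List (Fin N)) : 0 < wt θ w := by
  induction w with
  | nil => norm_num [wt]
  | cons i w ih => rw [wt_cons]; exact mul_pos (h i) ih

lemma wt_le_one (h : ∀ i, θ i ∈ Set.Ioo (0:ℝ) 1) (w : List (Fin N)) : wt θ w ≤ 1 := by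
  induction w with
  | nil => norm_num [wt]
  | cons i w ih =>
    rw [wt_cons]
    nlinarith [(h i).1, (h i).2, wt_pos (fun j => (h j).1) w]

lemma wt_lt_one (h : ∀ i, θ i ∈ Set.Ioo (0:ℝ) 1) {w : List (Fin N)} (hw : w ≠ []) :
    wt θ w < 1 := by
  cases w with
  | nil => exact absurd rfl hw
  | cons i w =>
    rw [wt_cons]
    nlinarith [(h i).1, (h i).2, wt_pos (fun j => (h j).1) w, wt_le_one h w]

lemma wt_le_pow {c : ℝ} (hc : 0 ≤ c) (h : ∀ i, θ i ≤ c) (h0 : ∀ i, 0 < θ i)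
    (w : List (Fin N)) : wt θ w ≤ c ^ w.length := by
  induction w with
  | nil => norm_num [wt]
  | cons i w ih =>
    rw [wt_cons, List.length_cons, pow_succ]
    have := wt_pos h0 w
    calc θ i * wt θ w ≤ c * c ^ w.length := by
          apply mul_le_mul (h i) ih (le_of_lt this) hc
      _ = c ^ (w.length + 1) := by ring

lemma partition_finite (hρ : ∀ i, ρ i ∈ Set.Ioo (0:ℝ) 1) [Nonempty (Fin N)]
    {r : ℝ} (hr : 0 < r) : (partition ρ r).Finite := by
  obtain ⟨m, -, hm⟩ := Finset.exists_max_image Finset.univ ρ Finset.univ_nonempty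
  obtain ⟨m', -, hm'⟩ := Finset.exists_min_image Finset.univ ρ Finset.univ_nonempty
  obtain ⟨L, hL⟩ := exists_pow_lt_of_lt_one (mul_pos hr (hρ m').1) (hρ m).2
  apply Set.Finite.subset (List.finite_length_le (Fin N) L)
  rintro v ⟨hne, h1, h2⟩
  simp only [Set.mem_setOf_eq]
  by_contra hlen
  push_neg at hlen
  have hlast : 0 < ρ (v.getLast hne) := (hρ _).1
  have h3 : r * ρ (v.getLast hne) < wt ρ v := by
    rw [lt_div_iff₀ hlast] at h2; exact h2
  have h4 : r * ρ m' ≤ r * ρ (v.getLast hne) :=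
    mul_le_mul_of_nonneg_left (hm' _ (Finset.mem_univ _)) (le_of_lt hr)
  have h5 : wt ρ v ≤ (ρ m) ^ v.length :=
    wt_le_pow (le_of_lt (hρ m).1) (fun i => hm i (Finset.mem_univ _)) (fun i => (hρ i).1) v
  have h6 : (ρ m) ^ v.length ≤ (ρ m) ^ L :=
    pow_le_pow_of_le_one (le_of_lt (hρ m).1) (le_of_lt (hρ m).2) (le_of_lt hlen)
  linarith

lemma Fword_append {M : Type*} (F : Fin N → M → M) (w v : List (Fin N)) :
    Fword F (w ++ v) = Fword F w ∘ Fword F v := by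
  induction w with
  | nil => rfl
  | cons i w ih => simp [Fword, ih, Function.comp_assoc]

lemma Fword_continuous {M : Type*} [MetricSpace M] (F : Fin N → M → M)
    (hcontr : ∀ i, ∀ x y : M, dist (F i x) (F i y) ≤ ρ i * dist x y)
    (hρ : ∀ i, ρ i ∈ Set.Ioo (0:ℝ) 1) (w : List (Fin N)) : Continuous (Fword F w) := by
  induction w with
  | nil => exact continuous_id
  | cons i w ih =>
    have : LipschitzWith ⟨ρ i, le_of_lt (hρ i).1⟩ (F i) :=
      LipschitzWith.of_dist_le_mul (hcontr i)
    exact this.continuous.comp ih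

lemma Fword_dist {M : Type*} [MetricSpace M] (F : Fin N → M → M)
    (hcontr : ∀ i, ∀ x y : M, dist (F i x) (F i y) ≤ ρ i * dist x y)
    (hρ : ∀ i, ρ i ∈ Set.Ioo (0:ℝ) 1) (w : List (Fin N)) (x y : M) :
    dist (Fword F w x) (Fword F w y) ≤ wt ρ w * dist x y := by
  induction w with
  | nil => simp [Fword, wt]
  | cons i w ih =>
    rw [wt_cons]
    calc dist (F i (Fword F w x)) (F i (Fword F w y))
        ≤ ρ i * dist (Fword F w x) (Fword F w y) := hcontr i _ _
      _ ≤ ρ i * (wt ρ w * dist x y) :=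
          mul_le_mul_of_nonneg_left ih (le_of_lt (hρ i).1)
      _ = ρ i * wt ρ w * dist x y := by ring

lemma cell_subset {M : Type*} (F : Fin N → M → M) (K : Set M)
    (hself : K = ⋃ i, F i '' K) (w : List (Fin N)) : cell F K w ⊆ K := by
  induction w with
  | nil => simp [cell, Fword]
  | cons i w ih =>
    intro x hx
    obtain ⟨y, hy, rfl⟩ := hx
    have : Fword F w y ∈ K := ih ⟨y, hy, rfl⟩
    rw [hself]
    exact Set.mem_iUnion.2 ⟨i, ⟨Fword F w y, this, rfl⟩⟩

open Classical in
noncomputable def stopT (ρ : Fin N → ℝ) (r : ℝ) : ℕ → List (Fin N) → Finset (List (Fin N))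
  | 0, w => {w}
  | n+1, w =>
      if wt ρ w ≤ r then {w}
      else Finset.univ.biUnion fun i => stopT ρ r n (w ++ [i])

lemma stopT_prefix {r : ℝ} : ∀ n (w v : List (Fin N)), v ∈ stopT ρ r n w → w <+: v := by
  intro n
  induction n with
  | zero => intro w v hv; simp only [stopT, Finset.mem_singleton] at hv; exact hv ▸ List.prefix_refl _
  | succ n ih =>
    intro w v hv
    rw [stopT] at hv
    split_ifs at hv with h
    · simp only [Finset.mem_singleton] at hv; exact hv ▸ List.prefix_refl _
    · obtain ⟨i, -, hi⟩ := Finset.mem_biUnion.1 hv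
      exact ((w.prefix_append [i]).trans (ih _ _ hi))

lemma stopT_mem {r c : ℝ} (hρ : ∀ i, ρ i ∈ Set.Ioo (0:ℝ) 1)
    (hc : ∀ i, ρ i ≤ c) (hc0 : 0 < c) :
    ∀ n (w : List (Fin N)), c ^ n * wt ρ w ≤ r → ∀ v ∈ stopT ρ r n w,
      (v = w ∧ wt ρ w ≤ r) ∨ v ∈ partition ρ r := by
  intro n
  induction n with
  | zero =>
    intro w hfuel v hv
    simp only [stopT, Finset.mem_singleton] at hv
    subst hv
    left
    constructor
    · rfl
    · simpa using hfuel
  | succ n ih =>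
    intro w hfuel v hv
    rw [stopT] at hv
    split_ifs at hv with h
    · simp only [Finset.mem_singleton] at hv; exact Or.inl ⟨hv, h⟩
    · push_neg at h
      obtain ⟨i, -, hi⟩ := Finset.mem_biUnion.1 hv
      have hwpos := wt_pos (fun j => (hρ j).1) w
      have hfuel' : c ^ n * wt ρ (w ++ [i]) ≤ r := by
        have h1 : wt ρ (w ++ [i]) = wt ρ w * ρ i := by
          rw [wt_append]; simp [wt]
        have h2 : c ^ n * (wt ρ w * ρ i) ≤ c ^ n * (wt ρ w * c) := by
          apply mul_le_mul_of_nonneg_left _ (pow_nonneg (le_of_lt hc0) n)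
          exact mul_le_mul_of_nonneg_left (hc i) (le_of_lt hwpos)
        rw [h1]
        calc c ^ n * (wt ρ w * ρ i) ≤ c ^ n * (wt ρ w * c) := h2
          _ = c ^ (n + 1) * wt ρ w := by ring
          _ ≤ r := hfuel
      rcases ih (w ++ [i]) hfuel' v hi with ⟨rfl, hle⟩ | hp
      · right
        have hne : w ++ [i] ≠ [] := by simp
        refine ⟨hne, hle, ?_⟩
        have hlast : (w ++ [i]).getLast hne = i := List.getLast_append _
        rw [hlast, wt_append]
        have : wt ρ [i] = ρ i := by simp [wt]
        rw [this, mul_div_assoc, div_self (ne_of_gt (hρ i).1), mul_one]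
        exact h
      · exact Or.inr hp


lemma stopT_sum {M : Type*} [MetricSpace M] [MeasurableSpace M] [BorelSpace M]
    (F : Fin N → M → M) (hρ : ∀ i, ρ i ∈ Set.Ioo (0:ℝ) 1)
    (hcontr : ∀ i, ∀ x y : M, dist (F i x) (F i y) ≤ ρ i * dist x y)
    (μ : Measure M)
    (hssm : ∀ A : Set M, MeasurableSet A →
      (μ A).toReal = ∑ i, p i * (μ (F i ⁻¹' A)).toReal)
    {A : Set M} (hA : MeasurableSet A) {r : ℝ} :
    ∀ n (w : List (Fin N)),
      wt p w * (μ (Fword F w ⁻¹' A)).toReal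
        = ∑ v ∈ stopT ρ r n w, wt p v * (μ (Fword F v ⁻¹' A)).toReal := by
  intro n
  induction n with
  | zero => intro w; simp [stopT]
  | succ n ih =>
    intro w
    rw [stopT]
    split_ifs with h
    · simp
    · have hdisj : (↑(Finset.univ : Finset (Fin N)) : Set (Fin N)).PairwiseDisjoint
          (fun i => stopT ρ r n (w ++ [i])) := by
        intro i _ j _ hij
        refine Finset.disjoint_left.2 fun v hvi hvj => hij ?_
        have h1 := stopT_prefix n (w ++ [i]) v hvi
        have h2 := stopT_prefix n (w ++ [j]) v hvj
        have hlen : (w ++ [i]).length ≤ (w ++ [j]).length := by simp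
        have h3 : (w ++ [i]) <+: (w ++ [j]) := List.prefix_of_prefix_length_le h1 h2 hlen
        have h4 : (w ++ [i]) = (w ++ [j]) := List.IsPrefix.eq_of_length h3 (by simp)
        simpa using h4
      rw [Finset.sum_biUnion hdisj]
      have hstep : (μ (Fword F w ⁻¹' A)).toReal
          = ∑ i, p i * (μ (Fword F (w ++ [i]) ⁻¹' A)).toReal := by
        have hmeas : MeasurableSet (Fword F w ⁻¹' A) :=
          hA.preimage (Fword_continuous F hcontr hρ w).measurable
        rw [hssm _ hmeas]
        apply Finset.sum_congr rfl
        intro i _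
        have hpre : Fword F (w ++ [i]) ⁻¹' A = F i ⁻¹' (Fword F w ⁻¹' A) := by
          rw [Fword_append, Set.preimage_comp]
          simp [Fword]
        rw [hpre]
      rw [hstep, Finset.mul_sum]
      apply Finset.sum_congr rfl
      intro i _
      rw [← ih (w ++ [i]), wt_append]
      have : wt p [i] = p i := by simp [wt]
      rw [this]; ring

/-- under the weak overlapping condition `(WOC_ρ)` with bound `L₁`
and the average condition `(AV_ρ)` with constant `C₊`, the self-similar measure
satisfies `μ(K_τ) ≤ C₊·L₁·p_τ` for every finite word `τ`. -/
theorem self_similar_measure_cell_upper_bound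
    {M : Type*} [MetricSpace M] [MeasurableSpace M] [BorelSpace M] {N : ℕ}
    (F : Fin N → M → M) (ρ p : Fin N → ℝ)
    (hρ : ∀ i, ρ i ∈ Set.Ioo (0 : ℝ) 1) (hp : ∀ i, p i ∈ Set.Ioo (0 : ℝ) 1)
    (hpsum : ∑ i, p i = 1)
    (hcontr : ∀ i, ∀ x y : M, dist (F i x) (F i y) ≤ ρ i * dist x y)
    (K : Set M) (hKne : K.Nonempty) (hKcomp : IsCompact K)
    (hself : K = ⋃ i, F i '' K) (hdiam : 0 < Metric.diam K)
    (μ : Measure M) [IsProbabilityMeasure μ] (hKfull : μ Kᶜ = 0)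
    (hssm : ∀ A : Set M, MeasurableSet A →
      (μ A).toReal = ∑ i, p i * (μ (F i ⁻¹' A)).toReal)
    (C₁ Cav : ℝ) (hC₁ : 2 ≤ C₁) (hCav : 1 ≤ Cav) (L₁ : ℕ) (hL₁ : 1 ≤ L₁)
    (hWOC : ∀ x ∈ K, ∀ r : ℝ, r ∈ Set.Ioo (0 : ℝ) 1 →
      {v : List (Fin N) | v ∈ partition ρ r ∧
        (cell F K v ∩ Metric.ball x (C₁ * Metric.diam K * r)).Nonempty}.ncard ≤ L₁)
    (hAV : ∀ τ v : List (Fin N), τ ≠ [] → v ∈ partition ρ (wt ρ τ) →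
      (cell F K v ∩ cell F K τ).Nonempty → wt p v ≤ Cav * wt p τ) :
    ∀ τ : List (Fin N), (μ (cell F K τ)).toReal ≤ Cav * L₁ * wt p τ := by
  intro τ
  have hN : Nonempty (Fin N) := by
    by_contra h
    rw [not_nonempty_iff] at h
    rw [Finset.univ_eq_empty, Finset.sum_empty] at hpsum
    norm_num at hpsum
  have hppos : ∀ i, 0 < p i := fun i => (hp i).1
  have hwtp_pos : 0 < wt p τ := wt_pos hppos τ
  have hL : (1:ℝ) ≤ (L₁:ℝ) := by exact_mod_cast hL₁
  rcases eq_or_ne τ [] with rfl | hτ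
  · have h1 : (μ (cell F K [])).toReal ≤ 1 := by
      have h2 := prob_le_one (μ := μ) (s := cell F K [])
      simpa using ENNReal.toReal_mono ENNReal.one_ne_top h2
    have he : wt p ([] : List (Fin N)) = 1 := rfl
    rw [he, mul_one]
    nlinarith
  · set r := wt ρ τ with hr_def
    have hr : r ∈ Set.Ioo (0:ℝ) 1 := ⟨wt_pos (fun i => (hρ i).1) τ, wt_lt_one hρ hτ⟩
    obtain ⟨m, -, hm⟩ := Finset.exists_max_image Finset.univ ρ Finset.univ_nonempty
    obtain ⟨n, hn⟩ := exists_pow_lt_of_lt_one hr.1 (hρ m).2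
    have hmem : ∀ v ∈ stopT ρ r n [], v ∈ partition ρ r := by
      intro v hv
      rcases stopT_mem hρ (fun i => hm i (Finset.mem_univ _)) (hρ m).1 n []
          (by simpa [wt_nil] using le_of_lt hn) v hv with ⟨-, hle⟩ | hp'
      · rw [wt_nil] at hle; linarith [hr.2]
      · exact hp'
    have hA : MeasurableSet (cell F K τ) :=
      (hKcomp.image (Fword_continuous F hcontr hρ τ)).measurableSet
    have hsum := stopT_sum F hρ hcontr μ hssm hA (r := r) n ([] : List (Fin N))
    rw [wt_nil, one_mul] at hsum
    have hFid : Fword F ([] : List (Fin N)) ⁻¹' (cell F K τ) = cell F K τ := by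
      simp [Fword]
    rw [hFid] at hsum
    have hzero : ∀ v : List (Fin N), ¬ (cell F K v ∩ cell F K τ).Nonempty →
        (μ (Fword F v ⁻¹' cell F K τ)).toReal = 0 := by
      intro v hv
      have hsub : Fword F v ⁻¹' cell F K τ ⊆ Kᶜ := by
        intro x hx
        by_contra hxK
        rw [Set.notMem_compl_iff] at hxK
        exact hv ⟨Fword F v x, ⟨x, hxK, rfl⟩, hx⟩
      have hle : μ (Fword F v ⁻¹' cell F K τ) ≤ μ Kᶜ := measure_mono hsub
      rw [hKfull] at hle
      rw [le_antisymm hle zero_le]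
      simp
    classical
    set V := (stopT ρ r n []).filter (fun v => (cell F K v ∩ cell F K τ).Nonempty) with hV
    have hsplit : (μ (cell F K τ)).toReal
        = ∑ v ∈ V, wt p v * (μ (Fword F v ⁻¹' cell F K τ)).toReal := by
      rw [hsum, ← Finset.sum_filter_add_sum_filter_not (stopT ρ r n [])
        (fun v => (cell F K v ∩ cell F K τ).Nonempty)]
      have hz : ∑ v ∈ (stopT ρ r n []).filter
          (fun v => ¬ (cell F K v ∩ cell F K τ).Nonempty),
          wt p v * (μ (Fword F v ⁻¹' cell F K τ)).toReal = 0 := by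
        apply Finset.sum_eq_zero
        intro v hv
        rw [hzero v (Finset.mem_filter.1 hv).2]
        ring
      rw [hz, add_zero]
    have hterm : ∀ v ∈ V,
        wt p v * (μ (Fword F v ⁻¹' cell F K τ)).toReal ≤ Cav * wt p τ := by
      intro v hv
      obtain ⟨hv1, hv2⟩ := Finset.mem_filter.1 hv
      have hAV' := hAV τ v hτ (hmem v hv1) hv2
      have h1 : (μ (Fword F v ⁻¹' cell F K τ)).toReal ≤ 1 := by
        have h2 := prob_le_one (μ := μ) (s := Fword F v ⁻¹' cell F K τ)
        simpa using ENNReal.toReal_mono ENNReal.one_ne_top h2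
      have h0 : 0 ≤ wt p v := le_of_lt (wt_pos hppos v)
      have h00 : (0:ℝ) ≤ (μ (Fword F v ⁻¹' cell F K τ)).toReal := ENNReal.toReal_nonneg
      nlinarith
    obtain ⟨x0, hx0K⟩ := hKne
    have hx : Fword F τ x0 ∈ cell F K τ := ⟨x0, hx0K, rfl⟩
    set x := Fword F τ x0 with hxdef
    have hxK : x ∈ K := cell_subset F K hself τ hx
    have hScard := hWOC x hxK r hr
    set S := {v : List (Fin N) | v ∈ partition ρ r ∧
        (cell F K v ∩ Metric.ball x (C₁ * Metric.diam K * r)).Nonempty} with hSdef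
    have hSfin : S.Finite := (partition_finite hρ hr.1).subset (fun v hv => hv.1)
    have hdiamcell : Metric.diam (cell F K τ) ≤ r * Metric.diam K := by
      apply Metric.diam_le_of_forall_dist_le
        (mul_nonneg (le_of_lt hr.1) (le_of_lt hdiam))
      rintro a ⟨y, hy, rfl⟩ b ⟨z, hz, rfl⟩
      calc dist (Fword F τ y) (Fword F τ z) ≤ wt ρ τ * dist y z :=
            Fword_dist F hcontr hρ τ y z
        _ ≤ r * Metric.diam K := mul_le_mul_of_nonneg_left
            (Metric.dist_le_diam_of_mem hKcomp.isBounded hy hz) (le_of_lt hr.1)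
    have hsubS : ↑V ⊆ S := by
      intro v hv
      obtain ⟨hv1, hv2⟩ := Finset.mem_filter.1 hv
      refine ⟨hmem v hv1, ?_⟩
      obtain ⟨y, hy1, hy2⟩ := hv2
      refine ⟨y, hy1, ?_⟩
      rw [Metric.mem_ball]
      have h1 : dist y x ≤ Metric.diam (cell F K τ) :=
        Metric.dist_le_diam_of_mem
          (hKcomp.image (Fword_continuous F hcontr hρ τ)).isBounded hy2 hx
      have h2 : r * Metric.diam K < C₁ * Metric.diam K * r := by
        nlinarith [mul_pos hr.1 hdiam]
      linarith
    have hcard : (V.card : ℝ) ≤ (L₁ : ℝ) := by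
      have h1 : V.card = (↑V : Set (List (Fin N))).ncard := (Set.ncard_coe_finset V).symm
      have h2 : (↑V : Set (List (Fin N))).ncard ≤ S.ncard := Set.ncard_le_ncard hsubS hSfin
      exact_mod_cast h1 ▸ le_trans h2 hScard
    calc (μ (cell F K τ)).toReal
        = ∑ v ∈ V, wt p v * (μ (Fword F v ⁻¹' cell F K τ)).toReal := hsplit
      _ ≤ ∑ v ∈ V, Cav * wt p τ := Finset.sum_le_sum hterm
      _ = V.card * (Cav * wt p τ) := by rw [Finset.sum_const, nsmul_eq_mul]
      _ ≤ L₁ * (Cav * wt p τ) := mul_le_mul_of_nonneg_right hcard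
            (mul_nonneg (by linarith) (le_of_lt hwtp_pos))
      _ = Cav * L₁ * wt p τ := by ring

end SSS
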